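/- Let Φ be a reduced, irreducible, crystallographic root system spanning a finite-dimensional vector space V over an ordered field (e.g. ℚ), and let Δ be a base (simple system) of Φ with associated set Φ⁺ of positive roots; thus Δ is linearly independent and every r ∈ Φ⁺ can be written uniquely as r = Σ_{γ∈Δ} c_γ(r)·γ with all coefficients c_γ(r) non-negative integers. Then for every α ∈ Δ, the linear span of the set {r ∈ Φ⁺ : c_α(r) > 0} equals the linear span of Φ (i.e. all of V). -/

import Mathlib

open scoped Pointwise

/-- Lemma 4.1: let `Φ` be a reduced, irreducible, crystallographic root system spanning a
finite-dimensional `ℚ`-vector space `V`, with base `Δ` and positive system `Φ⁺`, where each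
positive root `r` is the non-negative integral combination `∑_{γ ∈ Δ} coeff r γ • γ`.
Then for every `α ∈ Δ`, the span of `{r ∈ Φ⁺ : coeff r α > 0}` equals the span of `Φ`. -/
theorem span_positive_roots_with_coeff_pos
    (V : Type*) [AddCommGroup V] [Module ℚ V] [FiniteDimensional ℚ V]
    (B : V →ₗ[ℚ] V →ₗ[ℚ] ℚ) (hBsymm : ∀ u v : V, B u v = B v u)
    (Φ : Set V) (hΦfin : Φ.Finite) (hΦ0 : (0 : V) ∉ Φ)
    (hΦspan : Submodule.span ℚ Φ = ⊤)
    (hBpos : ∀ r ∈ Φ, 0 < B r r)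
    -- crystallographic
    (hcrys : ∀ r ∈ Φ, ∀ s ∈ Φ, ∃ k : ℤ, 2 * B r s = (k : ℚ) * B r r)
    -- reduced
    (hred : ∀ r ∈ Φ, ∀ c : ℚ, c • r ∈ Φ → c = 1 ∨ c = -1)
    -- closed under reflections
    (hrefl : ∀ r ∈ Φ, ∀ t ∈ Φ, t - (2 * B r t / B r r) • r ∈ Φ)
    -- irreducible
    (hirr : ∀ Φ₁ Φ₂ : Set V, Φ₁ ∪ Φ₂ = Φ → Φ₁ ∩ Φ₂ = ∅ →
      (∀ r ∈ Φ₁, ∀ s ∈ Φ₂, B r s = 0) → Φ₁ = ∅ ∨ Φ₂ = ∅)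
    -- base and positive system
    (Δ Φpos : Set V) (hΔΦ : Δ ⊆ Φ) (hΔpos : Δ ⊆ Φpos) (hpossub : Φpos ⊆ Φ)
    (hdecomp : Φ = Φpos ∪ -Φpos) (hdisj : Φpos ∩ -Φpos = ∅)
    (hli : LinearIndependent ℚ (fun x : Δ => (x : V)))
    (coeff : V → V → ℤ)
    (hcoeff : ∀ r ∈ Φpos,
      r = ∑ γ ∈ (hΦfin.subset hΔΦ).toFinset, ((coeff r γ : ℚ) • γ) ∧
      ∀ γ ∈ Δ, 0 ≤ coeff r γ) :
    ∀ α ∈ Δ, Submodule.span ℚ {r : V | r ∈ Φpos ∧ 0 < coeff r α} = Submodule.span ℚ Φ := by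

  intro α hα
  classical
  have hmemΔfin : ∀ γ : V, γ ∈ (hΦfin.subset hΔΦ).toFinset ↔ γ ∈ Δ :=
    fun γ => Set.Finite.mem_toFinset _
  -- span of Δ is everything
  have hΔspan : Submodule.span ℚ Δ = ⊤ := by
    rw [eq_top_iff, ← hΦspan, Submodule.span_le]
    have key : ∀ s ∈ Φpos, s ∈ Submodule.span ℚ Δ := by
      intro s hs
      rw [(hcoeff s hs).1]
      exact Submodule.sum_mem _ fun γ hγ =>
        Submodule.smul_mem _ _ (Submodule.subset_span ((hmemΔfin γ).1 hγ))
    intro r hr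
    rw [hdecomp] at hr
    rcases hr with h | h
    · exact key r h
    · have h' : -r ∈ Φpos := Set.mem_neg.mp h
      simpa using neg_mem (key (-r) h')
  have hrange : Set.range (fun x : Δ => (x : V)) = Δ := Subtype.range_coe
  let b : Module.Basis Δ ℚ V := Module.Basis.mk hli (by rw [hrange, hΔspan])
  let f : V →ₗ[ℚ] ℚ := b.coord ⟨α, hα⟩
  have hfΔ : ∀ γ : V, ∀ h : γ ∈ Δ, f γ = if γ = α then 1 else 0 := by
    intro γ h
    have hb : (γ : V) = b ⟨γ, h⟩ := (Module.Basis.mk_apply hli _ ⟨γ, h⟩).symm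
    conv_lhs => rw [hb]
    show (b.coord ⟨α, hα⟩) (b ⟨γ, h⟩) = _
    rw [Module.Basis.coord_apply, Module.Basis.repr_self, Finsupp.single_apply]
    simp [Subtype.ext_iff]
  have hfpos : ∀ r ∈ Φpos, f r = (coeff r α : ℚ) := by
    intro r hr
    conv_lhs => rw [(hcoeff r hr).1]
    rw [map_sum, Finset.sum_eq_single α]
    · rw [map_smul, hfΔ α hα, if_pos rfl]; simp
    · intro γ hγ hne
      rw [map_smul, hfΔ γ ((hmemΔfin γ).1 hγ), if_neg hne]; simp
    · intro h; exact absurd ((hmemΔfin α).2 hα) h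
  set S : Set V := {r : V | r ∈ Φpos ∧ 0 < coeff r α} with hSdef
  set U := Submodule.span ℚ S with hUdef
  -- any positive root with nonzero α-coordinate lies in S
  have lemA : ∀ r ∈ Φ, f r ≠ 0 → r ∈ U := by
    intro r hr hfr
    rw [hdecomp] at hr
    rcases hr with h | h
    · refine Submodule.subset_span ⟨h, ?_⟩
      have hf := hfpos r h
      have hnn := (hcoeff r h).2 α hα
      rcases lt_or_eq_of_le hnn with hlt | heq
      · exact hlt
      · exfalso; apply hfr; rw [hf, ← heq]; norm_num
    · have h' : -r ∈ Φpos := Set.mem_neg.mp h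
      have hfr' : f (-r) ≠ 0 := by
        rw [map_neg]; exact neg_ne_zero.mpr hfr
      have hmem : -r ∈ S := by
        refine ⟨h', ?_⟩
        have hf := hfpos (-r) h'
        have hnn := (hcoeff (-r) h').2 α hα
        rcases lt_or_eq_of_le hnn with hlt | heq
        · exact hlt
        · exfalso; apply hfr'; rw [hf, ← heq]; norm_num
      simpa using neg_mem (Submodule.subset_span hmem)
  have lemB : ∀ s ∈ Φ, ∀ r ∈ Φ, f r ≠ 0 → B r s ≠ 0 → s ∈ U := by
    intro s hs r hr hfr hBrs
    by_cases hfs : f s ≠ 0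
    · exact lemA s hs hfs
    push_neg at hfs
    have hBrr : 0 < B r r := hBpos r hr
    have hcne : (2 * B r s / B r r) ≠ 0 :=
      div_ne_zero (mul_ne_zero two_ne_zero hBrs) (ne_of_gt hBrr)
    have ht : s - (2 * B r s / B r r) • r ∈ Φ := hrefl r hr s hs
    have hft : f (s - (2 * B r s / B r r) • r) ≠ 0 := by
      rw [map_sub, map_smul, hfs, smul_eq_mul, zero_sub, neg_ne_zero]
      exact mul_ne_zero hcne hfr
    have htU : s - (2 * B r s / B r r) • r ∈ U := lemA _ ht hft
    have hrU : r ∈ U := lemA r hr hfr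
    have hseq : s = (s - (2 * B r s / B r r) • r) + (2 * B r s / B r r) • r := by
      abel
    rw [hseq]
    exact add_mem htU (Submodule.smul_mem _ _ hrU)
  have hUle : U ≤ Submodule.span ℚ Φ :=
    Submodule.span_le.mpr fun r hr => Submodule.subset_span (hpossub hr.1)
  have hΦU : ∀ r ∈ Φ, r ∈ U := by
    have horth : ∀ r ∈ {r ∈ Φ | r ∈ U}, ∀ s ∈ {r ∈ Φ | r ∉ U}, B r s = 0 := by
      intro r hr s hs
      by_contra hBrs
      have hex : ∃ u ∈ S, B u s ≠ 0 := by
        by_contra hall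
        push_neg at hall
        have hker : U ≤ LinearMap.ker (B.flip s) := by
          rw [hUdef, Submodule.span_le]
          intro u hu
          simpa [LinearMap.mem_ker] using hall u hu
        exact hBrs (by simpa using hker hr.2)
      obtain ⟨u, huS, huB⟩ := hex
      have huΦ : u ∈ Φ := hpossub huS.1
      have hfu : f u ≠ 0 := by
        rw [hfpos u huS.1]
        exact_mod_cast ne_of_gt huS.2
      exact hs.2 (lemB s hs.1 u huΦ hfu huB)
    rcases hirr {r ∈ Φ | r ∈ U} {r ∈ Φ | r ∉ U}
        (by ext x; simp only [Set.mem_union, Set.mem_setOf_eq]; tauto)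
        (by ext x; simp only [Set.mem_inter_iff, Set.mem_setOf_eq, Set.mem_empty_iff_false]; tauto) horth with h1 | h2
    · exfalso
      have hαΦpos : α ∈ Φpos := hΔpos hα
      have hfα : f α = (coeff α α : ℚ) := hfpos α hαΦpos
      rw [hfΔ α hα, if_pos rfl] at hfα
      have hαS : α ∈ S := by
        refine ⟨hαΦpos, ?_⟩
        have : (0:ℚ) < (coeff α α : ℚ) := by rw [← hfα]; norm_num
        exact_mod_cast this
      have hmem : α ∈ {r ∈ Φ | r ∈ U} := ⟨hΔΦ hα, Submodule.subset_span hαS⟩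
      rw [h1] at hmem
      exact hmem
    · intro r hr
      by_contra hrU
      have hmem : r ∈ {r ∈ Φ | r ∉ U} := ⟨hr, hrU⟩
      rw [h2] at hmem
      exact hmem
  exact le_antisymm hUle (Submodule.span_le.mpr fun r hr => hΦU r hr)
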